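/- There exists a constant c > 0 such that for every integer d ≥ 1, the Boolean hypercube [2]^d has a 2-TC-spanner with at most c·d³·max_{0≤i<j≤d} min_{i≤k≤j} [C(d,k)/C(j−i,k−i)]·max{C(k,i), C(d−k,d−j)} edges, where C(a,b) denotes the binomial coefficient. -/

import Mathlib

/-- There is a directed walk of length at most `k` from `u` to `v` in the digraph
with edge relation `E`. -/
def distLE {V : Type*} (E : V → V → Prop) : ℕ → V → V → Prop
  | 0 => fun u v => u = v
  | n + 1 => fun u v => u = v ∨ ∃ w, E u w ∧ distLE E n w v

/-- `H` is a `k`-transitive-closure-spanner of the digraph `E`: every edge of `H` is an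
edge of the transitive closure of `E`, and whenever `E` has a directed path from `u` to `v`,
`H` has one of length at most `k`. -/
def IsTCSpanner {V : Type*} (E H : V → V → Prop) (k : ℕ) : Prop :=
  (∀ u v, H u v → u ≠ v ∧ Relation.TransGen E u v) ∧
  (∀ u v, Relation.ReflTransGen E u v → distLE H k u v)

/-- The Boolean hypercube digraph `[2]^d`: an edge from `x` to `y` iff `y` is obtained from
`x` by flipping a single coordinate from `false` to `true`. -/
def cubeEdge (d : ℕ) (x y : Fin d → Bool) : Prop :=
  ∃ t, x t = false ∧ y = Function.update x t true

open Finset Relation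

variable {d : ℕ}

/-- support of a cube vertex -/
def supp (x : Fin d → Bool) : Finset (Fin d) := Finset.univ.filter (fun t => x t = true)

lemma mem_supp {x : Fin d → Bool} {t : Fin d} : t ∈ supp x ↔ x t = true := by
  simp [supp]

lemma supp_injective : Function.Injective (supp (d := d)) := by
  intro x y h
  funext t
  have := congrArg (t ∈ ·) h
  simp only [mem_supp, eq_iff_iff] at this
  cases hx : x t <;> cases hy : y t <;> simp_all

lemma le_iff_supp {x y : Fin d → Bool} : x ≤ y ↔ supp x ⊆ supp y := by
  constructor
  · intro h t ht
    rw [mem_supp] at ht ⊢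
    have := h t
    rw [ht] at this
    exact Bool.eq_true_of_true_le this
  · intro h t
    cases hx : x t
    · exact Bool.false_le _
    · have := h (mem_supp.2 hx)
      rw [mem_supp.1 this]

/-- weight -/
def wt (x : Fin d → Bool) : ℕ := (supp x).card

lemma wt_le (x : Fin d → Bool) : wt x ≤ d := by
  exact (card_le_card (filter_subset (fun t => x t = true) univ)).trans (by simp)

def ofSupp (s : Finset (Fin d)) : Fin d → Bool := fun t => decide (t ∈ s)

lemma supp_ofSupp (s : Finset (Fin d)) : supp (ofSupp s) = s := by
  ext t; simp [mem_supp, ofSupp]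

lemma wt_lt_of_le_ne {x y : Fin d → Bool} (h : x ≤ y) (hne : x ≠ y) : wt x < wt y := by
  apply Finset.card_lt_card
  exact Finset.ssubset_iff_subset_ne.2 ⟨le_iff_supp.1 h, fun hs => hne (supp_injective hs)⟩

lemma cubeEdge_le_ne {x y : Fin d → Bool} (h : cubeEdge d x y) : x ≤ y ∧ x ≠ y := by
  obtain ⟨t, hxt, rfl⟩ := h
  constructor
  · intro s
    by_cases hs : s = t
    · subst hs; simp [hxt]
    · simp [Function.update_of_ne hs]
  · intro he
    have := congrFun he t
    simp [hxt] at this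

lemma reflTransGen_le {x y : Fin d → Bool} (h : Relation.ReflTransGen (cubeEdge d) x y) :
    x ≤ y := by
  induction h with
  | refl => exact le_refl _
  | tail _ he ih => exact le_trans ih (cubeEdge_le_ne he).1

lemma le_reflTransGen {x y : Fin d → Bool} (h : x ≤ y) :
    Relation.ReflTransGen (cubeEdge d) x y := by
  generalize hn : (supp y \ supp x).card = n
  induction n generalizing x with
  | zero =>
    have : supp y \ supp x = ∅ := Finset.card_eq_zero.1 hn
    have hsub : supp y ⊆ supp x := by
      intro t ht
      by_contra hts
      exact absurd (Finset.mem_sdiff.2 ⟨ht, hts⟩) (by simp [this])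
    have : supp x = supp y := Finset.Subset.antisymm (le_iff_supp.1 h) hsub
    rw [supp_injective this]
  | succ n ih =>
    have hne : (supp y \ supp x).Nonempty := by
      rw [← Finset.card_pos, hn]; omega
    obtain ⟨t, ht⟩ := hne
    rw [Finset.mem_sdiff, mem_supp] at ht
    obtain ⟨hyt, hxt⟩ := ht
    have hxf : x t = false := by
      cases hx : x t
      · rfl
      · exact absurd (mem_supp.2 hx) hxt
    set x' := Function.update x t true with hx'
    have hedge : cubeEdge d x x' := ⟨t, hxf, rfl⟩
    have hle' : x' ≤ y := by
      intro s
      by_cases hs : s = t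
      · subst hs; simp [hx', hyt]
      · simp only [hx', Function.update_of_ne hs]; exact h s
    have hsupp' : supp x' = insert t (supp x) := by
      ext s
      simp only [mem_supp, Finset.mem_insert, hx']
      by_cases hs : s = t
      · subst hs; simp
      · simp [Function.update_of_ne hs, mem_supp, hs]
    have hcard : (supp y \ supp x').card = n := by
      rw [hsupp']
      have : supp y \ insert t (supp x) = (supp y \ supp x).erase t := by
        ext s
        simp only [Finset.mem_sdiff, Finset.mem_insert, Finset.mem_erase]
        tauto
      rw [this, Finset.card_erase_of_mem (Finset.mem_sdiff.2 ⟨mem_supp.2 hyt, hxt⟩), hn]; omega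
    exact Relation.ReflTransGen.head hedge (ih hle' hcard)

lemma le_transGen {x y : Fin d → Bool} (h : x ≤ y) (hne : x ≠ y) :
    Relation.TransGen (cubeEdge d) x y := by
  rcases (Relation.reflTransGen_iff_eq_or_transGen.1 (le_reflTransGen h)) with h1 | h1
  · exact absurd h1.symm hne
  · exact h1

open scoped Classical

noncomputable section

/-- level set -/
def levelF (d k : ℕ) : Finset (Fin d → Bool) := Finset.univ.filter (fun z => wt z = k)

lemma mem_levelF {k : ℕ} {z : Fin d → Bool} : z ∈ levelF d k ↔ wt z = k := by
  simp [levelF]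

lemma card_levelF (d k : ℕ) : (levelF d k).card = d.choose k := by
  have hu : (Finset.univ.powersetCard k : Finset (Finset (Fin d))).card = d.choose k := by
    rw [Finset.card_powersetCard]; simp
  rw [← hu]
  apply Finset.card_bij (fun z _ => supp z)
  · intro z hz
    rw [Finset.mem_powersetCard]
    exact ⟨Finset.subset_univ _, mem_levelF.1 hz⟩
  · intro a ha b hb h
    exact supp_injective h
  · intro s hs
    refine ⟨ofSupp s, ?_, supp_ofSupp s⟩
    rw [mem_levelF, wt, supp_ofSupp]
    exact (Finset.mem_powersetCard.1 hs).2

lemma union_sdiff_cancel {s t : Finset (Fin d)} (h : Disjoint s t) : (s ∪ t) \ s = t := by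
  rw [Finset.union_sdiff_left, Finset.sdiff_eq_self_of_disjoint h.symm]

lemma card_interval_ge {i j k : ℕ} {x y : Fin d → Bool} (hxy : x ≤ y)
    (hx : wt x = i) (hy : wt y = j) (hik : i ≤ k) (hkj : k ≤ j) :
    (j - i).choose (k - i) ≤
      (((levelF d k)).filter (fun z => x ≤ z ∧ z ≤ y)).card := by
  simp only [wt] at hx hy
  have hdiff : (supp y \ supp x).card = j - i := by
    rw [Finset.card_sdiff_of_subset (le_iff_supp.1 hxy)]
    omega
  rw [← hdiff, ← Finset.card_powersetCard (k - i) (supp y \ supp x)]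
  have hdisj : ∀ s : Finset (Fin d), s ⊆ supp y \ supp x → Disjoint (supp x) s := by
    intro s hsub
    refine Finset.disjoint_left.2 fun t ht hts => ?_
    exact (Finset.mem_sdiff.1 (hsub hts)).2 ht
  apply Finset.card_le_card_of_injOn (fun s => ofSupp (supp x ∪ s))
  · intro s hs
    rw [Finset.mem_coe, Finset.mem_powersetCard] at hs
    obtain ⟨hsub, hcard⟩ := hs
    rw [Finset.mem_coe, Finset.mem_filter, mem_levelF]
    refine ⟨?_, ?_, ?_⟩
    · simp only [wt, supp_ofSupp]
      rw [Finset.card_union_of_disjoint (hdisj s hsub), hcard, hx]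
      omega
    · rw [le_iff_supp, supp_ofSupp]; exact Finset.subset_union_left
    · rw [le_iff_supp, supp_ofSupp]
      exact Finset.union_subset (le_iff_supp.1 hxy)
        (fun t ht => (Finset.mem_sdiff.1 (hsub ht)).1)
  · intro s hs s' hs' h
    rw [Finset.mem_coe, Finset.mem_powersetCard] at hs hs'
    have h2 := congrArg supp h
    rw [supp_ofSupp, supp_ofSupp] at h2
    calc s = (supp x ∪ s) \ supp x := (union_sdiff_cancel (hdisj s hs.1)).symm
    _ = (supp x ∪ s') \ supp x := by rw [h2]
    _ = s' := union_sdiff_cancel (hdisj s' hs'.1)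

lemma card_below_le {i k : ℕ} {z : Fin d → Bool} (hz : wt z = k) :
    (((levelF d i)).filter (fun x => x ≤ z)).card ≤ k.choose i := by
  rw [← hz, wt, ← Finset.card_powersetCard i (supp z)]
  apply Finset.card_le_card_of_injOn (fun x => supp x)
  · intro x hx
    rw [Finset.mem_coe, Finset.mem_filter, mem_levelF] at hx
    rw [Finset.mem_coe, Finset.mem_powersetCard]
    exact ⟨le_iff_supp.1 hx.2, hx.1⟩
  · intro a _ b _ h
    exact supp_injective h

lemma card_above_le {j k : ℕ} {z : Fin d → Bool} (hz : wt z = k) (hjd : j ≤ d) (hkj : k ≤ j) :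
    (((levelF d j)).filter (fun y => z ≤ y)).card ≤ (d - k).choose (d - j) := by
  have h1 : (Finset.univ \ supp z).card = d - k := by
    rw [Finset.card_sdiff_of_subset (Finset.subset_univ _)]
    simp [← hz, wt]
  rw [← h1, ← Finset.card_powersetCard (d - j) (Finset.univ \ supp z)]
  apply Finset.card_le_card_of_injOn (fun y => Finset.univ \ supp y)
  · intro y hy
    rw [Finset.mem_coe, Finset.mem_filter, mem_levelF] at hy
    rw [Finset.mem_coe, Finset.mem_powersetCard]
    constructor
    · exact Finset.sdiff_subset_sdiff (le_refl _) (le_iff_supp.1 hy.2)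
    · rw [Finset.card_sdiff_of_subset (Finset.subset_univ _)]
      simp [← hy.1, wt]
  · intro a ha b hb h
    rw [Finset.mem_coe, Finset.mem_filter] at ha hb
    apply supp_injective
    have : ∀ u : Finset (Fin d), Finset.univ \ (Finset.univ \ u) = u := by
      intro u; simp
    calc supp a = Finset.univ \ (Finset.univ \ supp a) := (this _).symm
    _ = Finset.univ \ (Finset.univ \ supp b) := by rw [show Finset.univ \ supp a = Finset.univ \ supp b from h]
    _ = supp b := this _

end

noncomputable section
open scoped Classical

lemma choose_le_choose_cube (d i j k : ℕ) (hik : i ≤ k) (hkj : k ≤ j) (hjd : j ≤ d) :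
    (j - i).choose (k - i) ≤ d.choose k := by
  obtain ⟨s, hs, hscard⟩ := Finset.exists_subset_card_eq (s := (Finset.univ : Finset (Fin d))) (n := j) (by simpa)
  obtain ⟨s', hs', hscard'⟩ := Finset.exists_subset_card_eq (s := s) (n := i) (by omega)
  have hxy : ofSupp s' ≤ ofSupp s := by
    rw [le_iff_supp, supp_ofSupp, supp_ofSupp]; exact hs'
  have h1 := card_interval_ge (i := i) (j := j) (k := k) hxy
    (by rw [wt, supp_ofSupp]; exact hscard') (by rw [wt, supp_ofSupp]; exact hscard) hik hkj
  calc (j - i).choose (k - i) ≤ _ := h1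
  _ ≤ (levelF d k).card := Finset.card_le_card (Finset.filter_subset _ _)
  _ = d.choose k := card_levelF d k

lemma greedy_cover (d i j k : ℕ) (hik : i ≤ k) (hkj : k ≤ j) (hjd : j ≤ d) :
    ∀ (m : ℕ) (T : Finset ((Fin d → Bool) × (Fin d → Bool))),
      (∀ t ∈ T, wt t.1 = i ∧ wt t.2 = j ∧ t.1 ≤ t.2) →
      (T.card : ℝ) * (1 - ((j - i).choose (k - i) : ℝ) / (d.choose k : ℝ)) ^ m < 1 →
      ∃ Z : Finset (Fin d → Bool), Z ⊆ levelF d k ∧ Z.card ≤ m ∧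
        ∀ t ∈ T, ∃ z ∈ Z, t.1 ≤ z ∧ z ≤ t.2 := by
  have hCdk : 0 < d.choose k := Nat.choose_pos (by omega)
  have hCji : 0 < (j - i).choose (k - i) := Nat.choose_pos (by omega)
  set p : ℝ := ((j - i).choose (k - i) : ℝ) / (d.choose k : ℝ) with hp
  have hp0 : 0 < p := by positivity
  have hp1 : p ≤ 1 := by
    rw [hp, div_le_one (by positivity)]
    exact_mod_cast choose_le_choose_cube d i j k hik hkj hjd
  intro m
  induction m with
  | zero =>
    intro T hT hlt
    simp only [pow_zero, mul_one] at hlt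
    have : T.card = 0 := by exact_mod_cast Nat.lt_one_iff.1 (by exact_mod_cast hlt)
    refine ⟨∅, Finset.empty_subset _, le_refl _, fun t ht => ?_⟩
    rw [Finset.card_eq_zero.1 this] at ht
    simp at ht
  | succ m ih =>
    intro T hT hlt
    by_cases hTe : T = ∅
    · exact ⟨∅, Finset.empty_subset _, Nat.zero_le _, fun t ht => by simp [hTe] at ht⟩
    -- double counting
    have hkey : T.card * (j - i).choose (k - i) ≤
        ∑ z ∈ levelF d k, (T.filter (fun t => t.1 ≤ z ∧ z ≤ t.2)).card := by
      have h1 : ∀ z, (T.filter (fun t => t.1 ≤ z ∧ z ≤ t.2)).card =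
          ∑ t ∈ T, if t.1 ≤ z ∧ z ≤ t.2 then 1 else 0 := by
        intro z; rw [Finset.card_filter]
      simp only [h1]
      rw [Finset.sum_comm]
      have h2 : ∀ t ∈ T, (j - i).choose (k - i) ≤
          ∑ z ∈ levelF d k, if t.1 ≤ z ∧ z ≤ t.2 then 1 else 0 := by
        intro t ht
        rw [← Finset.card_filter]
        exact card_interval_ge (hT t ht).2.2 (hT t ht).1 (hT t ht).2.1 hik hkj
      calc T.card * (j - i).choose (k - i) = ∑ _t ∈ T, (j - i).choose (k - i) := by
            rw [Finset.sum_const, smul_eq_mul]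
      _ ≤ _ := Finset.sum_le_sum h2
    have hLne : (levelF d k).Nonempty := by
      rw [← Finset.card_pos, card_levelF]; exact hCdk
    have hgood : ∃ z ∈ levelF d k, T.card * (j - i).choose (k - i) ≤
        (levelF d k).card * (T.filter (fun t => t.1 ≤ z ∧ z ≤ t.2)).card := by
      apply Finset.exists_le_of_sum_le hLne
      rw [Finset.sum_const, smul_eq_mul, ← Finset.mul_sum]
      exact Nat.mul_le_mul_left _ hkey
    obtain ⟨z, hzL, hzc⟩ := hgood
    set C := (T.filter (fun t => t.1 ≤ z ∧ z ≤ t.2)).card with hC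
    set T' := T.filter (fun t => ¬(t.1 ≤ z ∧ z ≤ t.2)) with hT'
    have hsplit : C + T'.card = T.card := Finset.card_filter_add_card_filter_not _
    have hCge : (T.card : ℝ) * p ≤ C := by
      rw [hp, mul_div_assoc'] -- (T.card * Cji)/Cdk ≤ C
      rw [div_le_iff₀ (by positivity)]
      rw [card_levelF] at hzc
      calc (T.card : ℝ) * ((j - i).choose (k - i) : ℝ) = ((T.card * (j - i).choose (k - i) : ℕ) : ℝ) := by push_cast; ring
      _ ≤ ((d.choose k * C : ℕ) : ℝ) := by exact_mod_cast hzc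
      _ = C * (d.choose k : ℝ) := by push_cast; ring
    have hT'le : (T'.card : ℝ) ≤ (T.card : ℝ) * (1 - p) := by
      have : (T'.card : ℝ) = (T.card : ℝ) - C := by
        have := hsplit; push_cast [← this]; ring
      rw [this]; nlinarith [hCge]
    have hlt' : (T'.card : ℝ) * (1 - p) ^ m < 1 := by
      have h1p : (0:ℝ) ≤ 1 - p := by linarith
      calc (T'.card : ℝ) * (1 - p) ^ m ≤ ((T.card : ℝ) * (1 - p)) * (1 - p) ^ m := by
            apply mul_le_mul_of_nonneg_right hT'le (by positivity)
      _ = (T.card : ℝ) * (1 - p) ^ (m + 1) := by ring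
      _ < 1 := hlt
    obtain ⟨Z', hZ'L, hZ'c, hZ'cov⟩ := ih T' (fun t ht => hT t (Finset.filter_subset _ _ ht)) hlt'
    refine ⟨insert z Z', Finset.insert_subset hzL hZ'L, ?_, ?_⟩
    · calc (insert z Z').card ≤ Z'.card + 1 := Finset.card_insert_le _ _
      _ ≤ m + 1 := by omega
    · intro t ht
      by_cases hzt : t.1 ≤ z ∧ z ≤ t.2
      · exact ⟨z, Finset.mem_insert_self _ _, hzt⟩
      · obtain ⟨z', hz'⟩ := hZ'cov t (Finset.mem_filter.2 ⟨ht, hzt⟩)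
        exact ⟨z', Finset.mem_insert_of_mem hz'.1, hz'.2⟩

end

noncomputable section
open scoped Classical

lemma four_lt_exp_two : (4:ℝ) < Real.exp 2 := by
  have h := Real.exp_one_gt_d9
  have : Real.exp 2 = Real.exp 1 * Real.exp 1 := by
    rw [← Real.exp_add]; norm_num
  nlinarith

lemma pair_edges (d i j k : ℕ) (hd : 1 ≤ d) (hij : i < j) (hjd : j ≤ d)
    (hik : i ≤ k) (hkj : k ≤ j) :
    ∃ E : Finset ((Fin d → Bool) × (Fin d → Bool)),
      (∀ p ∈ E, p.1 ≤ p.2 ∧ p.1 ≠ p.2) ∧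
      (∀ x y : Fin d → Bool, wt x = i → wt y = j → x ≤ y →
        ∃ z, x ≤ z ∧ z ≤ y ∧ (x = z ∨ (x, z) ∈ E) ∧ (z = y ∨ (z, y) ∈ E)) ∧
      (E.card : ℝ) ≤ 6 * d *
        (((d.choose k : ℝ) / ((j - i).choose (k - i) : ℝ)) *
          max ((k.choose i : ℝ)) (((d - k).choose (d - j) : ℝ))) := by
  have hCdk : 0 < d.choose k := Nat.choose_pos (by omega)
  have hCji : 0 < (j - i).choose (k - i) := Nat.choose_pos (by omega)
  have hCle : (j - i).choose (k - i) ≤ d.choose k := choose_le_choose_cube d i j k hik hkj hjd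
  set p : ℝ := ((j - i).choose (k - i) : ℝ) / (d.choose k : ℝ) with hp
  have hp0 : 0 < p := by positivity
  have hp1 : p ≤ 1 := by
    rw [hp, div_le_one (by positivity)]; exact_mod_cast hCle
  set m : ℕ := 2 * d * d.choose k / (j - i).choose (k - i) + 1 with hm
  set T : Finset ((Fin d → Bool) × (Fin d → Bool)) :=
    ((levelF d i) ×ˢ (levelF d j)).filter (fun t => t.1 ≤ t.2) with hT
  have hTmem : ∀ t ∈ T, wt t.1 = i ∧ wt t.2 = j ∧ t.1 ≤ t.2 := by
    intro t ht
    rw [hT, Finset.mem_filter, Finset.mem_product, mem_levelF, mem_levelF] at ht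
    exact ⟨ht.1.1, ht.1.2, ht.2⟩
  -- the smallness condition
  have hpm : 2 * (d:ℝ) < p * m := by
    have h1 : 2 * d * d.choose k < m * (j - i).choose (k - i) := by
      rw [hm]
      have := (Nat.div_lt_iff_lt_mul hCji).1
        (Nat.lt_succ_self (2 * d * d.choose k / (j - i).choose (k - i)))
      exact this
    have h1' : (2 * (d:ℝ)) * (d.choose k : ℝ) < (m:ℝ) * ((j - i).choose (k - i) : ℝ) := by
      exact_mod_cast h1
    rw [hp]
    rw [div_mul_eq_mul_div, lt_div_iff₀ (by positivity)]
    nlinarith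
  have hlt : (T.card : ℝ) * (1 - p) ^ m < 1 := by
    have hTcard : (T.card : ℝ) ≤ (4:ℝ) ^ d := by
      calc (T.card : ℝ) ≤ (Fintype.card ((Fin d → Bool) × (Fin d → Bool)) : ℝ) := by
            exact_mod_cast Finset.card_le_univ T
      _ = (4:ℝ) ^ d := by
        simp [Fintype.card_prod, Fintype.card_fun]
        rw [← mul_pow]; norm_num
    have h1p : (0:ℝ) ≤ 1 - p := by linarith
    have hpow : (1 - p) ^ m ≤ Real.exp (-(p * m)) := by
      calc (1 - p) ^ m ≤ (Real.exp (-p)) ^ m := by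
            apply pow_le_pow_left₀ h1p
            linarith [Real.add_one_le_exp (-p)]
      _ = Real.exp (-(p * m)) := by
        rw [← Real.exp_nat_mul]; ring_nf
    calc (T.card : ℝ) * (1 - p) ^ m ≤ (4:ℝ) ^ d * Real.exp (-(p * m)) := by
          apply mul_le_mul hTcard hpow (by positivity) (by positivity)
    _ < (4:ℝ) ^ d * Real.exp (-(2 * d)) := by
        apply mul_lt_mul_of_pos_left _ (by positivity)
        apply Real.exp_lt_exp.2
        linarith
    _ = ((4:ℝ) / Real.exp 2) ^ d := by
        have hE : Real.exp (-(2 * (d:ℝ))) = (Real.exp 2 ^ d)⁻¹ := by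
          rw [show (2 * (d:ℝ)) = (d:ℕ) * 2 by push_cast; ring, Real.exp_neg, Real.exp_nat_mul]
        rw [hE, div_pow, div_eq_mul_inv]
    _ < 1 := by
        apply pow_lt_one₀ (by positivity)
        · rw [div_lt_one (Real.exp_pos 2)]; exact four_lt_exp_two
        · omega
  obtain ⟨Z, hZL, hZm, hZcov⟩ := greedy_cover d i j k hik hkj hjd m T hTmem hlt
  -- the edge set
  set f : (Fin d → Bool) → Finset ((Fin d → Bool) × (Fin d → Bool)) := fun z =>
    ((levelF d i).filter (fun x => x ≤ z ∧ x ≠ z)).image (fun x => (x, z)) ∪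
    ((levelF d j).filter (fun y => z ≤ y ∧ z ≠ y)).image (fun y => (z, y)) with hf
  refine ⟨Z.biUnion f, ?_, ?_, ?_⟩
  · intro q hq
    rw [Finset.mem_biUnion] at hq
    obtain ⟨z, hz, hqz⟩ := hq
    rw [hf, Finset.mem_union] at hqz
    rcases hqz with h | h <;> rw [Finset.mem_image] at h <;>
      obtain ⟨w, hw, rfl⟩ := h <;> rw [Finset.mem_filter] at hw
    · exact ⟨hw.2.1, hw.2.2⟩
    · exact ⟨hw.2.1, fun hcon => hw.2.2 hcon⟩
  · intro x y hx hy hxy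
    have hxyT : (x, y) ∈ T := by
      rw [hT, Finset.mem_filter, Finset.mem_product, mem_levelF, mem_levelF]
      exact ⟨⟨hx, hy⟩, hxy⟩
    obtain ⟨z, hzZ, hxz, hzy⟩ := hZcov (x, y) hxyT
    refine ⟨z, hxz, hzy, ?_, ?_⟩
    · by_cases hne : x = z
      · exact Or.inl hne
      · refine Or.inr (Finset.mem_biUnion.2 ⟨z, hzZ, ?_⟩)
        rw [hf, Finset.mem_union]
        left
        rw [Finset.mem_image]
        exact ⟨x, Finset.mem_filter.2 ⟨mem_levelF.2 hx, hxz, hne⟩, rfl⟩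
    · by_cases hne : z = y
      · exact Or.inl hne
      · refine Or.inr (Finset.mem_biUnion.2 ⟨z, hzZ, ?_⟩)
        rw [hf, Finset.mem_union]
        right
        rw [Finset.mem_image]
        exact ⟨y, Finset.mem_filter.2 ⟨mem_levelF.2 hy, hzy, hne⟩, rfl⟩
  · -- cardinality bound
    have hfz : ∀ z ∈ Z, (f z).card ≤ k.choose i + (d - k).choose (d - j) := by
      intro z hz
      have hwz : wt z = k := mem_levelF.1 (hZL hz)
      calc (f z).card ≤ _ + _ := Finset.card_union_le _ _
      _ ≤ k.choose i + (d - k).choose (d - j) := by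
        apply Nat.add_le_add
        · calc _ ≤ ((levelF d i).filter (fun x => x ≤ z ∧ x ≠ z)).card :=
                Finset.card_image_le
          _ ≤ ((levelF d i).filter (fun x => x ≤ z)).card := by
              apply Finset.card_le_card
              apply Finset.monotone_filter_right
              intro x _ hx; exact hx.1
          _ ≤ k.choose i := card_below_le hwz
        · calc _ ≤ ((levelF d j).filter (fun y => z ≤ y ∧ z ≠ y)).card :=
                Finset.card_image_le
          _ ≤ ((levelF d j).filter (fun y => z ≤ y)).card := by
              apply Finset.card_le_card
              apply Finset.monotone_filter_right
              intro y _ hy; exact hy.1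
          _ ≤ (d - k).choose (d - j) := card_above_le hwz hjd hkj
    have hEcard : (Z.biUnion f).card ≤ m * (k.choose i + (d - k).choose (d - j)) := by
      calc (Z.biUnion f).card ≤ ∑ z ∈ Z, (f z).card := Finset.card_biUnion_le
      _ ≤ ∑ _z ∈ Z, (k.choose i + (d - k).choose (d - j)) := Finset.sum_le_sum hfz
      _ = Z.card * (k.choose i + (d - k).choose (d - j)) := by
          rw [Finset.sum_const, smul_eq_mul]
      _ ≤ m * (k.choose i + (d - k).choose (d - j)) := Nat.mul_le_mul_right _ hZm
    have hmR : (m:ℝ) ≤ 3 * d * ((d.choose k : ℝ) / ((j - i).choose (k - i) : ℝ)) := by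
      have h1 : ((2 * d * d.choose k / (j - i).choose (k - i) : ℕ) : ℝ) ≤
          (2 * d * d.choose k : ℝ) / ((j - i).choose (k - i) : ℝ) := by
        apply Nat.cast_div_le.trans
        push_cast
        exact le_refl _
      have h2 : (1:ℝ) ≤ (d:ℝ) * ((d.choose k : ℝ) / ((j - i).choose (k - i) : ℝ)) := by
        have hd1 : (1:ℝ) ≤ (d:ℝ) := by exact_mod_cast hd
        have hr : (1:ℝ) ≤ (d.choose k : ℝ) / ((j - i).choose (k - i) : ℝ) := by
          rw [le_div_iff₀ (by positivity)]
          rw [one_mul]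
          exact_mod_cast hCle
        nlinarith
      have h3 : (m:ℝ) = ((2 * d * d.choose k / (j - i).choose (k - i) : ℕ) : ℝ) + 1 := by
        rw [hm]; push_cast; ring
      have h1' : ((2 * d * d.choose k / (j - i).choose (k - i) : ℕ) : ℝ) ≤
          2 * (d:ℝ) * ((d.choose k : ℝ) / ((j - i).choose (k - i) : ℝ)) := by
        refine h1.trans (le_of_eq ?_)
        push_cast; ring
      rw [h3]
      nlinarith [h1', h2]
    have hmax : (k.choose i : ℝ) + ((d - k).choose (d - j) : ℝ) ≤
        2 * max ((k.choose i : ℝ)) (((d - k).choose (d - j) : ℝ)) := by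
      have := le_max_left ((k.choose i : ℝ)) (((d - k).choose (d - j) : ℝ))
      have := le_max_right ((k.choose i : ℝ)) (((d - k).choose (d - j) : ℝ))
      linarith
    have hmax0 : (0:ℝ) ≤ max ((k.choose i : ℝ)) (((d - k).choose (d - j) : ℝ)) := by
      positivity
    calc ((Z.biUnion f).card : ℝ) ≤ (m : ℝ) * ((k.choose i : ℝ) + ((d - k).choose (d - j) : ℝ)) := by
          exact_mod_cast Nat.cast_le.2 hEcard |>.trans (by push_cast; rfl)
    _ ≤ (3 * d * ((d.choose k : ℝ) / ((j - i).choose (k - i) : ℝ))) *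
          (2 * max ((k.choose i : ℝ)) (((d - k).choose (d - j) : ℝ))) := by
        apply mul_le_mul hmR hmax (by positivity)
        positivity
    _ = 6 * d * (((d.choose k : ℝ) / ((j - i).choose (k - i) : ℝ)) *
          max ((k.choose i : ℝ)) (((d - k).choose (d - j) : ℝ))) := by ring

end

noncomputable section
open scoped Classical

lemma pair_final (d i j : ℕ) (hd : 1 ≤ d) (hij : i < j) (hjd : j ≤ d) :
    ∃ E : Finset ((Fin d → Bool) × (Fin d → Bool)),
      (∀ p ∈ E, p.1 ≤ p.2 ∧ p.1 ≠ p.2) ∧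
      (∀ x y : Fin d → Bool, wt x = i → wt y = j → x ≤ y →
        ∃ z, x ≤ z ∧ z ≤ y ∧ (x = z ∨ (x, z) ∈ E) ∧ (z = y ∨ (z, y) ∈ E)) ∧
      (E.card : ℝ) ≤ 6 * d * sInf ((fun k : ℕ =>
        ((d.choose k : ℝ) / ((j - i).choose (k - i) : ℝ)) *
          max ((k.choose i : ℝ)) (((d - k).choose (d - j) : ℝ))) '' Set.Icc i j) := by
  set g : ℕ → ℝ := fun k =>
    ((d.choose k : ℝ) / ((j - i).choose (k - i) : ℝ)) *
      max ((k.choose i : ℝ)) (((d - k).choose (d - j) : ℝ)) with hg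
  have hne : (g '' Set.Icc i j).Nonempty := by
    refine ⟨g i, Set.mem_image_of_mem g ?_⟩
    exact Set.mem_Icc.2 ⟨le_refl _, le_of_lt hij⟩
  have hfin : (g '' Set.Icc i j).Finite := (Set.finite_Icc i j).image g
  have hmem := hne.csInf_mem hfin
  obtain ⟨k, hk, hgk⟩ := hmem
  rw [Set.mem_Icc] at hk
  obtain ⟨E, h1, h2, h3⟩ := pair_edges d i j k hd hij hjd hk.1 hk.2
  exact ⟨E, h1, h2, by rw [← hgk]; exact h3⟩

/-- There is a constant `c > 0` such that for every `d ≥ 1` the hypercube `[2]^d` has a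
2-TC-spanner with at most
`c·d³·max_{0 ≤ i < j ≤ d} min_{i ≤ k ≤ j} [C(d,k)/C(j-i,k-i)]·max{C(k,i), C(d-k,d-j)}`
edges. -/
theorem stmt15 :
    ∃ c : ℝ, 0 < c ∧ ∀ d : ℕ, 1 ≤ d →
      ∃ H : (Fin d → Bool) → (Fin d → Bool) → Prop,
        IsTCSpanner (cubeEdge d) H 2 ∧
        (({p : (Fin d → Bool) × (Fin d → Bool) | H p.1 p.2}).ncard : ℝ) ≤
          c * (d : ℝ) ^ 3 *
            sSup {x : ℝ | ∃ i j : ℕ, i < j ∧ j ≤ d ∧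
              x = sInf ((fun k : ℕ =>
                ((d.choose k : ℝ) / ((j - i).choose (k - i) : ℝ)) *
                  max ((k.choose i : ℝ)) (((d - k).choose (d - j) : ℝ))) '' Set.Icc i j)} := by
  refine ⟨24, by norm_num, ?_⟩
  intro d hd
  set mval : ℕ → ℕ → ℝ := fun i j => sInf ((fun k : ℕ =>
    ((d.choose k : ℝ) / ((j - i).choose (k - i) : ℝ)) *
      max ((k.choose i : ℝ)) (((d - k).choose (d - j) : ℝ))) '' Set.Icc i j) with hmval
  set SSet : Set ℝ := {x : ℝ | ∃ i j : ℕ, i < j ∧ j ≤ d ∧ x = mval i j} with hSSet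
  set S : ℝ := sSup SSet with hS
  -- boundedness
  have hSfin : SSet.Finite := by
    have : SSet ⊆ (fun p : ℕ × ℕ => mval p.1 p.2) '' (Set.Iic d ×ˢ Set.Iic d) := by
      rintro x ⟨i, j, hij, hjd, rfl⟩
      exact ⟨(i, j), ⟨Set.mem_Iic.2 (by omega), Set.mem_Iic.2 hjd⟩, rfl⟩
    exact Set.Finite.subset (((Set.finite_Iic d).prod (Set.finite_Iic d)).image _) this
  have hbdd : BddAbove SSet := hSfin.bddAbove
  have hmle : ∀ i j : ℕ, i < j → j ≤ d → mval i j ≤ S :=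
    fun i j hij hjd => le_csSup hbdd ⟨i, j, hij, hjd, rfl⟩
  -- choose edge sets
  have hex : ∀ p : ℕ × ℕ, ∃ E : Finset ((Fin d → Bool) × (Fin d → Bool)),
      (p.1 < p.2 ∧ p.2 ≤ d) →
      ((∀ q ∈ E, q.1 ≤ q.2 ∧ q.1 ≠ q.2) ∧
      (∀ x y : Fin d → Bool, wt x = p.1 → wt y = p.2 → x ≤ y →
        ∃ z, x ≤ z ∧ z ≤ y ∧ (x = z ∨ (x, z) ∈ E) ∧ (z = y ∨ (z, y) ∈ E)) ∧
      (E.card : ℝ) ≤ 6 * d * mval p.1 p.2) := by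
    intro p
    by_cases hc : p.1 < p.2 ∧ p.2 ≤ d
    · obtain ⟨E, h1, h2, h3⟩ := pair_final d p.1 p.2 hd hc.1 hc.2
      exact ⟨E, fun _ => ⟨h1, h2, h3⟩⟩
    · exact ⟨∅, fun h => absurd h hc⟩
  choose F hF using hex
  set P : Finset (ℕ × ℕ) :=
    (Finset.range (d + 1) ×ˢ Finset.range (d + 1)).filter (fun p => p.1 < p.2) with hP
  have hPc : ∀ p ∈ P, p.1 < p.2 ∧ p.2 ≤ d := by
    intro p hp
    rw [hP, Finset.mem_filter, Finset.mem_product, Finset.mem_range, Finset.mem_range] at hp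
    exact ⟨hp.2, by omega⟩
  set E : Finset ((Fin d → Bool) × (Fin d → Bool)) := P.biUnion F with hE
  refine ⟨fun x y => (x, y) ∈ E, ⟨?_, ?_⟩, ?_⟩
  · -- edges in TC
    intro u v huv
    rw [hE, Finset.mem_biUnion] at huv
    obtain ⟨p, hp, hq⟩ := huv
    have := ((hF p (hPc p hp)).1 (u, v) hq)
    exact ⟨this.2, le_transGen this.1 this.2⟩
  · -- coverage
    intro u v hder
    have huv : u ≤ v := reflTransGen_le hder
    by_cases he : u = v
    · exact Or.inl he
    · have hij : wt u < wt v := wt_lt_of_le_ne huv he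
      have hjd : wt v ≤ d := wt_le v
      have hpP : (wt u, wt v) ∈ P := by
        rw [hP, Finset.mem_filter, Finset.mem_product, Finset.mem_range, Finset.mem_range]
        exact ⟨⟨by omega, by omega⟩, hij⟩
      have hsub : F (wt u, wt v) ⊆ E := by
        rw [hE]; exact Finset.subset_biUnion_of_mem F hpP
      obtain ⟨z, hxz, hzy, hc1, hc2⟩ :=
        (hF (wt u, wt v) (hPc _ hpP)).2.1 u v rfl rfl huv
      rcases hc1 with rfl | h1
      · rcases hc2 with rfl | h2
        · exact absurd rfl he
        · exact Or.inr ⟨v, hsub h2, Or.inl rfl⟩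
      · rcases hc2 with rfl | h2
        · exact Or.inr ⟨z, hsub h1, Or.inl rfl⟩
        · exact Or.inr ⟨z, hsub h1, Or.inr ⟨v, hsub h2, rfl⟩⟩
  · -- cardinality
    have hset : {p : (Fin d → Bool) × (Fin d → Bool) | (p.1, p.2) ∈ E} = ↑E := by
      ext ⟨a, b⟩
      simp only [Set.mem_setOf_eq, Finset.mem_coe]
    rw [hset, Set.ncard_coe_finset]
    have hS0 : 0 ≤ 6 * (d:ℝ) * S := by
      have h01 : ((0:ℕ), (1:ℕ)) ∈ P := by
        rw [hP, Finset.mem_filter, Finset.mem_product, Finset.mem_range, Finset.mem_range]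
        exact ⟨⟨by omega, by omega⟩, by omega⟩
      have := (hF (0, 1) (hPc _ h01)).2.2
      have hm := hmle 0 1 (by omega) hd
      have : (0:ℝ) ≤ 6 * d * mval 0 1 := le_trans (Nat.cast_nonneg _) this
      nlinarith [hm, this]
    have hcard : (E.card : ℝ) ≤ (P.card : ℝ) * (6 * d * S) := by
      have h1 : E.card ≤ ∑ p ∈ P, (F p).card := Finset.card_biUnion_le
      have h2 : ((∑ p ∈ P, (F p).card : ℕ) : ℝ) ≤ ∑ p ∈ P, (6 * (d:ℝ) * S) := by
        push_cast
        apply Finset.sum_le_sum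
        intro p hp
        calc ((F p).card : ℝ) ≤ 6 * d * mval p.1 p.2 := (hF p (hPc p hp)).2.2
        _ ≤ 6 * d * S := by
            have := hmle p.1 p.2 (hPc p hp).1 (hPc p hp).2
            nlinarith
      calc (E.card : ℝ) ≤ ((∑ p ∈ P, (F p).card : ℕ) : ℝ) := by exact_mod_cast h1
      _ ≤ ∑ p ∈ P, (6 * (d:ℝ) * S) := h2
      _ = (P.card : ℝ) * (6 * d * S) := by rw [Finset.sum_const, nsmul_eq_mul]
    have hPcard : (P.card : ℝ) ≤ 4 * (d:ℝ) ^ 2 := by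
      have h1 : P.card ≤ (d + 1) * (d + 1) := by
        calc P.card ≤ ((Finset.range (d + 1)) ×ˢ (Finset.range (d + 1))).card :=
              Finset.card_le_card (Finset.filter_subset _ _)
        _ = (d + 1) * (d + 1) := by rw [Finset.card_product, Finset.card_range]
      have h2 : (d + 1) * (d + 1) ≤ 4 * d ^ 2 := by nlinarith
      calc (P.card : ℝ) ≤ ((d + 1) * (d + 1) : ℕ) := by exact_mod_cast h1
      _ ≤ ((4 * d ^ 2 : ℕ) : ℝ) := by exact_mod_cast h2
      _ = 4 * (d:ℝ) ^ 2 := by push_cast; ring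
    calc (E.card : ℝ) ≤ (P.card : ℝ) * (6 * d * S) := hcard
    _ ≤ (4 * (d:ℝ) ^ 2) * (6 * d * S) := mul_le_mul_of_nonneg_right hPcard hS0
    _ = 24 * (d:ℝ) ^ 3 * S := by ring

end
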